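/- Let Ω be a completely regular Hausdorff space and A ⊆ C(Ω, [0,1]) a family that separates disjoint zero-sets of Ω (for disjoint zero-sets Z₁, Z₂ there is φ ∈ A with cl(φ(Z₁)) ∩ cl(φ(Z₂)) = ∅). If 𝓕 is a z-filter on Ω such that for every φ ∈ A the set ⋂_{F ∈ 𝓕} cl(φ(F)) is a single point, then ⋂_{F ∈ 𝓕} cl_β F consists of exactly one point of βΩ. -/

import Mathlib

/-- A zero-set of a topological space. -/
def IsZeroSet {Ω : Type*} [TopologicalSpace Ω] (Z : Set Ω) : Prop :=
  ∃ h : Ω → ℝ, Continuous h ∧ Z = h ⁻¹' {0}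

/-- A z-filter on `Ω`. -/
def IsZFilter {Ω : Type*} [TopologicalSpace Ω] (𝓕 : Set (Set Ω)) : Prop :=
  𝓕.Nonempty ∧ (∀ Z ∈ 𝓕, IsZeroSet Z) ∧ (∅ : Set Ω) ∉ 𝓕 ∧
    (∀ Z₁ ∈ 𝓕, ∀ Z₂ ∈ 𝓕, Z₁ ∩ Z₂ ∈ 𝓕) ∧
    (∀ Z ∈ 𝓕, ∀ Z' : Set Ω, IsZeroSet Z' → Z ⊆ Z' → Z' ∈ 𝓕)

theorem stmt_9 {Ω : Type*} [TopologicalSpace Ω] [CompletelyRegularSpace Ω]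
    [T2Space Ω] (A : Set (Ω → ℝ))
    (hcont : ∀ φ ∈ A, Continuous φ)
    (hrange : ∀ φ ∈ A, ∀ x, φ x ∈ Set.Icc (0 : ℝ) 1)
    (hsep : ∀ Z₁ Z₂ : Set Ω, IsZeroSet Z₁ → IsZeroSet Z₂ → Z₁ ∩ Z₂ = ∅ →
      ∃ φ ∈ A, closure (φ '' Z₁) ∩ closure (φ '' Z₂) = ∅)
    (𝓕 : Set (Set Ω)) (h𝓕 : IsZFilter 𝓕)
    (hsingle : ∀ φ ∈ A, ∃ r : ℝ, (⋂ F ∈ 𝓕, closure (φ '' F)) = {r}) :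
    ∃ p : StoneCech Ω, (⋂ F ∈ 𝓕, closure (stoneCechUnit '' F)) = {p} := by
  classical
  obtain ⟨⟨F₀, hF₀⟩, hZ, hne, hinter, hsup⟩ := h𝓕
  have hFne : ∀ F ∈ 𝓕, F.Nonempty := by
    intro F hF
    rcases Set.eq_empty_or_nonempty F with h | h
    · exact absurd (h ▸ hF) hne
    · exact h
  -- Existence of a point in the intersection
  have hexists : (⋂ F ∈ 𝓕, closure (stoneCechUnit '' F)).Nonempty := by
    haveI : Nonempty 𝓕 := ⟨⟨F₀, hF₀⟩⟩
    have h : (⋂ F : 𝓕, closure (stoneCechUnit '' (F : Set Ω))).Nonempty := by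
      apply IsCompact.nonempty_iInter_of_directed_nonempty_isCompact_isClosed
      · rintro ⟨F₁, h₁⟩ ⟨F₂, h₂⟩
        exact ⟨⟨F₁ ∩ F₂, hinter _ h₁ _ h₂⟩,
          closure_mono (Set.image_mono Set.inter_subset_left),
          closure_mono (Set.image_mono Set.inter_subset_right)⟩
      · rintro ⟨F, hF⟩
        exact ((hFne F hF).image _).closure
      · intro _; exact isClosed_closure.isCompact
      · intro _; exact isClosed_closure
    obtain ⟨p, hp⟩ := h
    refine ⟨p, Set.mem_iInter₂.2 fun F hF => ?_⟩
    exact Set.mem_iInter.1 hp ⟨F, hF⟩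
  obtain ⟨p, hp⟩ := hexists
  refine ⟨p, Set.eq_singleton_iff_unique_mem.2 ⟨hp, ?_⟩⟩
  intro q hq
  by_contra hpq
  -- Urysohn function separating p and q in βΩ
  obtain ⟨g, hg0, hg1, -⟩ := exists_continuous_zero_one_of_isClosed
    (isClosed_singleton (x := q)) (isClosed_singleton (x := p))
    (Set.disjoint_singleton.2 hpq)
  have hgq : g q = 0 := hg0 rfl
  have hgp : g p = 1 := hg1 rfl
  -- Two disjoint zero-sets of Ω
  set h₁ : Ω → ℝ := fun x => max (g (stoneCechUnit x) - 1/3) 0 with hh₁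
  set h₂ : Ω → ℝ := fun x => max (2/3 - g (stoneCechUnit x)) 0 with hh₂
  have hc₁ : Continuous h₁ :=
    ((g.continuous.comp continuous_stoneCechUnit).sub continuous_const).max continuous_const
  have hc₂ : Continuous h₂ :=
    (continuous_const.sub (g.continuous.comp continuous_stoneCechUnit)).max continuous_const
  set Z₁ : Set Ω := h₁ ⁻¹' {0} with hZ₁
  set Z₂ : Set Ω := h₂ ⁻¹' {0} with hZ₂
  have hmax0 : ∀ a : ℝ, max a 0 = 0 ↔ a ≤ 0 := fun a => max_eq_right_iff
  have hZ₁mem : ∀ x, x ∈ Z₁ ↔ g (stoneCechUnit x) ≤ 1/3 := by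
    intro x
    have h : x ∈ Z₁ ↔ max (g (stoneCechUnit x) - 1/3) 0 = 0 := Iff.rfl
    rw [h, hmax0, sub_nonpos]
  have hZ₂mem : ∀ x, x ∈ Z₂ ↔ 2/3 ≤ g (stoneCechUnit x) := by
    intro x
    have h : x ∈ Z₂ ↔ max (2/3 - g (stoneCechUnit x)) 0 = 0 := Iff.rfl
    rw [h, hmax0, sub_nonpos]
  have hdisj : Z₁ ∩ Z₂ = ∅ := by
    ext x
    simp only [Set.mem_inter_iff, Set.mem_empty_iff_false, iff_false, not_and]
    intro h1 h2
    have := (hZ₁mem x).1 h1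
    have := (hZ₂mem x).1 h2
    linarith
  -- p ∈ cl_β(unit '' Z₂), q ∈ cl_β(unit '' Z₁)
  have hclmem : ∀ (y : StoneCech Ω) (U : Set ℝ) (Z : Set Ω), IsOpen U → g y ∈ U →
      (∀ x, g (stoneCechUnit x) ∈ U → x ∈ Z) → y ∈ closure (stoneCechUnit '' Z) := by
    intro y U Z hU hyU hUZ
    rw [mem_closure_iff]
    intro V hV hyV
    obtain ⟨x, hx⟩ := denseRange_stoneCechUnit.exists_mem_open (hV.inter (hU.preimage g.continuous))
      ⟨y, hyV, hyU⟩
    exact ⟨stoneCechUnit x, hx.1, x, hUZ x hx.2, rfl⟩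
  have hpZ : p ∈ closure (stoneCechUnit '' Z₂) := by
    refine hclmem p (Set.Ioi (2/3)) Z₂ isOpen_Ioi (by rw [hgp]; norm_num) ?_
    intro x hx
    exact (hZ₂mem x).2 (le_of_lt hx)
  have hqZ : q ∈ closure (stoneCechUnit '' Z₁) := by
    refine hclmem q (Set.Iio (1/3)) Z₁ isOpen_Iio (by rw [hgq]; norm_num) ?_
    intro x hx
    exact (hZ₁mem x).2 (le_of_lt hx)
  -- Apply separation hypothesis
  obtain ⟨φ, hφA, hφsep⟩ := hsep Z₁ Z₂ ⟨h₁, hc₁, rfl⟩ ⟨h₂, hc₂, rfl⟩ hdisj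
  obtain ⟨r, hr⟩ := hsingle φ hφA
  -- Extend φ to βΩ
  set ψ : Ω → Set.Icc (0 : ℝ) 1 := fun x => ⟨φ x, hrange φ hφA x⟩ with hψ
  have hψc : Continuous ψ := Continuous.subtype_mk (hcont φ hφA) _
  set Φ : StoneCech Ω → ℝ := fun y => (stoneCechExtend hψc y).1 with hΦ
  have hΦc : Continuous Φ := continuous_subtype_val.comp (continuous_stoneCechExtend hψc)
  have hΦunit : ∀ x, Φ (stoneCechUnit x) = φ x := by
    intro x
    have := congrFun (stoneCechExtend_extends hψc) x
    simp only [Function.comp_apply] at this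
    show (stoneCechExtend hψc (stoneCechUnit x)).1 = φ x
    rw [this]
  have key : ∀ (S : Set Ω) (y : StoneCech Ω), y ∈ closure (stoneCechUnit '' S) →
      Φ y ∈ closure (φ '' S) := by
    intro S y hy
    have h1 : Φ y ∈ Φ '' closure (stoneCechUnit '' S) := ⟨y, hy, rfl⟩
    have h2 := image_closure_subset_closure_image (f := Φ) hΦc (s := stoneCechUnit '' S)
    have h3 : Φ '' (stoneCechUnit '' S) = φ '' S := by
      rw [Set.image_image]
      exact Set.image_congr fun x _ => hΦunit x
    rw [h3] at h2
    exact h2 h1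
  -- Both Φ p and Φ q equal r
  have hΦp : Φ p = r := by
    have : Φ p ∈ ⋂ F ∈ 𝓕, closure (φ '' F) := by
      simp only [Set.mem_iInter]
      intro F hF
      exact key F p (by simpa using Set.mem_iInter₂.1 hp F hF)
    rwa [hr, Set.mem_singleton_iff] at this
  have hΦq : Φ q = r := by
    have : Φ q ∈ ⋂ F ∈ 𝓕, closure (φ '' F) := by
      simp only [Set.mem_iInter]
      intro F hF
      exact key F q (by simpa using Set.mem_iInter₂.1 hq F hF)
    rwa [hr, Set.mem_singleton_iff] at this
  have hr1 : r ∈ closure (φ '' Z₁) := hΦq ▸ key Z₁ q hqZ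
  have hr2 : r ∈ closure (φ '' Z₂) := hΦp ▸ key Z₂ p hpZ
  have : r ∈ closure (φ '' Z₁) ∩ closure (φ '' Z₂) := ⟨hr1, hr2⟩
  rw [hφsep] at this
  exact this
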